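/- Let (W,S) be a Coxeter system with S finite such that for every proper subset I ⊊ S the standard parabolic subgroup W_I is finite, and let k be the maximum over all proper subsets I ⊊ S of the maximal length of an element of W_I. If σ, v ∈ W satisfy ℓ(v) ≥ (k+1)·ℓ(σ), then σ ≤ v in the Bruhat order. -/

import Mathlib

/-- The Bruhat order on a Coxeter group: `u ≤ w` iff some reduced word for `w`
has a sublist (subword) which is a reduced word for `u`. -/
def CoxeterSystem.bruhatLE {B W : Type*} [Group W] {M : CoxeterMatrix B}
    (cs : CoxeterSystem M W) (u w : W) : Prop :=
  ∃ ω : List B, cs.IsReduced ω ∧ cs.wordProd ω = w ∧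
    ∃ ω' : List B, ω'.Sublist ω ∧ cs.IsReduced ω' ∧ cs.wordProd ω' = u

private lemma mem_split_first {α : Type*} {a : α} {l : List α} (h : a ∈ l) :
    ∃ s t, l = s ++ a :: t ∧ a ∉ s := by
  induction l with
  | nil => simp at h
  | cons b l ih =>
    by_cases hb : a = b
    · exact ⟨[], l, by simp [hb], by simp⟩
    · have h' : a ∈ l := by
        rcases List.mem_cons.mp h with h | h
        · exact absurd h hb
        · exact h
      rcases ih h' with ⟨s, t, rfl, hs⟩
      exact ⟨b :: s, t, rfl, by simp [hs, hb]⟩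

private lemma wordProd_mem_closure {B W : Type*} [Group W] {M : CoxeterMatrix B}
    (cs : CoxeterSystem M W) {I : Set B} {l : List B} (hl : ∀ j ∈ l, j ∈ I) :
    cs.wordProd l ∈ Subgroup.closure (cs.simple '' I) := by
  rw [CoxeterSystem.wordProd]
  apply list_prod_mem
  intro x hx
  rcases List.mem_map.mp hx with ⟨j, hj, rfl⟩
  exact Subgroup.subset_closure ⟨j, hl j hj, rfl⟩

private lemma subword_aux {B W : Type*} [Group W] {M : CoxeterMatrix B}
    (cs : CoxeterSystem M W) (k : ℕ)
    (hub : ∀ n ∈ {n : ℕ | ∃ I : Set B, I ≠ Set.univ ∧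
      ∃ w ∈ Subgroup.closure (cs.simple '' I), cs.length w = n}, n ≤ k) :
    ∀ n (σ : W), cs.length σ = n → ∀ ω : List B, cs.IsReduced ω →
      (k + 1) * n ≤ ω.length →
      ∃ χ : List B, χ.Sublist ω ∧ cs.IsReduced χ ∧ cs.wordProd χ = σ := by
  intro n
  induction n using Nat.strong_induction_on with
  | _ n ih =>
    intro σ hσ ω hω hlen
    rcases Nat.eq_zero_or_pos n with rfl | hn
    · refine ⟨[], List.nil_sublist ω, ?_, ?_⟩
      · simp [CoxeterSystem.IsReduced]
      · simp [(cs.length_eq_zero_iff).mp hσ]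
    · obtain ⟨m, rfl⟩ : ∃ m, n = m + 1 := ⟨n - 1, by omega⟩
      have hσ1 : σ ≠ 1 := by
        intro h; rw [h, cs.length_one] at hσ; omega
      obtain ⟨i, hi⟩ := cs.exists_leftDescent_of_ne_one hσ1
      have hi' : cs.length (cs.simple i * σ) + 1 = m + 1 := by
        rw [← hσ]; exact cs.isLeftDescent_iff.mp hi
      -- i must occur in ω
      have himem : i ∈ ω := by
        by_contra hni
        have hmem : cs.wordProd ω ∈ Subgroup.closure (cs.simple '' (Set.univ \ {i})) :=
          wordProd_mem_closure cs (fun j hj => ⟨trivial, fun hj' => hni (hj' ▸ hj)⟩)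
        have hIne : (Set.univ \ {i} : Set B) ≠ Set.univ := by
          intro h
          have : i ∈ (Set.univ \ {i} : Set B) := by rw [h]; trivial
          exact this.2 rfl
        have hle : cs.length (cs.wordProd ω) ≤ k :=
          hub _ ⟨Set.univ \ {i}, hIne, cs.wordProd ω, hmem, rfl⟩
        rw [hω] at hle
        have : (k + 1) * 1 ≤ (k + 1) * (m + 1) := Nat.mul_le_mul_left _ (by omega)
        omega
      obtain ⟨l₁, l₂, rfl, hnl₁⟩ := mem_split_first himem
      -- l₁ is reduced, lies in a proper parabolic, so has length ≤ k
      have hl₁red : cs.IsReduced l₁ := by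
        have := hω.take l₁.length
        rwa [List.take_left] at this
      have hl₁le : l₁.length ≤ k := by
        have hmem : cs.wordProd l₁ ∈ Subgroup.closure (cs.simple '' (Set.univ \ {i})) :=
          wordProd_mem_closure cs (fun j hj => ⟨trivial, fun hj' => hnl₁ (hj' ▸ hj)⟩)
        have hIne : (Set.univ \ {i} : Set B) ≠ Set.univ := by
          intro h
          have : i ∈ (Set.univ \ {i} : Set B) := by rw [h]; trivial
          exact this.2 rfl
        have := hub _ ⟨Set.univ \ {i}, hIne, cs.wordProd l₁, hmem, rfl⟩
        rwa [hl₁red] at this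
      -- the suffix i :: l₂ and l₂ are reduced
      have hsufred : cs.IsReduced (i :: l₂) := by
        have := hω.drop l₁.length
        rwa [List.drop_left] at this
      have hl₂red : cs.IsReduced l₂ := by
        have := hsufred.drop 1
        simpa using this
      -- apply induction hypothesis to s i * σ and l₂
      have hlen₂ : (k + 1) * m ≤ l₂.length := by
        have h1 : (l₁ ++ i :: l₂).length = l₁.length + 1 + l₂.length := by
          simp; omega
        have h2 : (k + 1) * (m + 1) = (k + 1) * m + (k + 1) := Nat.mul_succ _ _
        omega
      obtain ⟨χ, hχsub, hχred, hχprod⟩ :=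
        ih m (by omega) (cs.simple i * σ) (by omega) l₂ hl₂red hlen₂
      refine ⟨i :: χ, ?_, ?_, ?_⟩
      · exact (List.Sublist.cons₂ i hχsub).trans (List.sublist_append_right _ _)
      · have hprod : cs.wordProd (i :: χ) = σ := by
          rw [cs.wordProd_cons, hχprod, CoxeterSystem.simple_mul_simple_cancel_left]
        rw [CoxeterSystem.IsReduced, hprod, hσ]
        have : χ.length = m := by
          rw [← hχred, hχprod]; omega
        simp [this]
      · rw [cs.wordProd_cons, hχprod, CoxeterSystem.simple_mul_simple_cancel_left]

/-- If every proper standard parabolic subgroup of a Coxeter system (with finitely many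
generators) is finite, and `k` is the maximum over all proper subsets `I ⊊ S` of the maximal
length of an element of `W_I`, then `ℓ(v) ≥ (k+1)·ℓ(σ)` implies `σ ≤ v` in Bruhat order. -/
theorem bruhat_le_of_length_ge
    {B W : Type*} [Group W] [Finite B] {M : CoxeterMatrix B} (cs : CoxeterSystem M W)
    (hpar : ∀ I : Set B, I ≠ Set.univ →
      ((Subgroup.closure (cs.simple '' I) : Subgroup W) : Set W).Finite)
    (k : ℕ)
    (hk : IsGreatest {n : ℕ | ∃ I : Set B, I ≠ Set.univ ∧
      ∃ w ∈ Subgroup.closure (cs.simple '' I), cs.length w = n} k)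
    (σ v : W) (h : (k + 1) * cs.length σ ≤ cs.length v) :
    cs.bruhatLE σ v := by
  obtain ⟨ω, hωred, hωprod⟩ := cs.exists_reduced_word' v
  obtain ⟨χ, hsub, hred, hprod⟩ := subword_aux cs k hk.2 (cs.length σ) σ rfl ω hωred
    (by rw [← hωred, ← hωprod]; exact h)
  exact ⟨ω, hωred, hωprod.symm, χ, hsub, hred, hprod⟩
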